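/- Let A and Σ be symmetric positive definite d×d real matrices and set D̃ := AΣA − I_d. Then ⟨AΣD̃, D̃⟩_F = tr(AΣD̃²) = tr((AΣA)^{1/2}(D̃ A^{−1} D̃)(AΣA)^{1/2}) ≥ 0. -/

import Mathlib

open MeasureTheory ProbabilityTheory Filter Real Matrix
open scoped RealInnerProductSpace Topology NNReal

noncomputable section

/-- Action of a `d × d` matrix on a vector of `EuclideanSpace ℝ (Fin d)`. -/
def mvec {d : ℕ} (A : Matrix (Fin d) (Fin d) ℝ) (x : EuclideanSpace ℝ (Fin d)) :
    EuclideanSpace ℝ (Fin d) :=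
  Matrix.toEuclideanCLM (𝕜 := ℝ) A x

/-- Outer product `x yᵀ` of two Euclidean vectors, as a matrix. -/
def outer {d : ℕ} (x y : EuclideanSpace ℝ (Fin d)) : Matrix (Fin d) (Fin d) ℝ :=
  Matrix.vecMulVec (fun i => x i) (fun i => y i)

/-- Frobenius norm of a matrix. -/
def frob {d : ℕ} (M : Matrix (Fin d) (Fin d) ℝ) : ℝ :=
  Real.sqrt (∑ i, ∑ j, (M i j) ^ 2)

/-- Frobenius inner product of two matrices. -/
def frobInner {d : ℕ} (M N : Matrix (Fin d) (Fin d) ℝ) : ℝ :=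
  (Mᵀ * N).trace

/-- Smallest eigenvalue of a symmetric matrix, as the infimum of the quadratic
form over the unit sphere. -/
def lmin {d : ℕ} (M : Matrix (Fin d) (Fin d) ℝ) : ℝ :=
  ⨅ v : {v : EuclideanSpace ℝ (Fin d) // ‖v‖ = 1},
    ⟪(v : EuclideanSpace ℝ (Fin d)), mvec M v⟫

/-- Largest eigenvalue of a symmetric matrix, as the supremum of the quadratic
form over the unit sphere. -/
def lmax {d : ℕ} (M : Matrix (Fin d) (Fin d) ℝ) : ℝ :=
  ⨆ v : {v : EuclideanSpace ℝ (Fin d) // ‖v‖ = 1},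
    ⟪(v : EuclideanSpace ℝ (Fin d)), mvec M v⟫

/-- Weighted averaging weights `w_{t+1} = ln(t+1)^τ / ∑_{k=0}^t ln(k+1)^τ`. -/
def wWeight (τ : ℝ) (t : ℕ) : ℝ :=
  Real.log ((t : ℝ) + 1) ^ τ / ∑ k ∈ Finset.range (t + 1), Real.log ((k : ℝ) + 1) ^ τ

open scoped ComplexOrder in
/-- The positive semidefinite square root of a positive semidefinite matrix
(the definition `Matrix.PosSemidef.sqrt` of the older Mathlib, since removed). -/
def Matrix.PosSemidef.sqrt {n 𝕜 : Type*} [Fintype n] [RCLike 𝕜] [DecidableEq n]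
    {A : Matrix n n 𝕜} (hA : A.PosSemidef) : Matrix n n 𝕜 :=
  hA.1.eigenvectorUnitary.1 * diagonal ((↑) ∘ (√·) ∘ hA.1.eigenvalues) *
  (star hA.1.eigenvectorUnitary : Matrix n n 𝕜)

lemma psdSqrt_mul_self {d : ℕ} {M : Matrix (Fin d) (Fin d) ℝ} (hM : M.PosSemidef) :
    hM.sqrt * hM.sqrt = M := by
  have hU : star (hM.1.eigenvectorUnitary : Matrix (Fin d) (Fin d) ℝ) *
      (hM.1.eigenvectorUnitary : Matrix (Fin d) (Fin d) ℝ) = 1 :=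
    Unitary.coe_star_mul_self _
  conv_rhs => rw [hM.1.spectral_theorem, Unitary.conjStarAlgAut_apply]
  unfold Matrix.PosSemidef.sqrt
  rw [show ∀ U D V : Matrix (Fin d) (Fin d) ℝ, U * D * V * (U * D * V) = U * (D * (V * U) * D) * V
    from fun U D V => by noncomm_ring, hU, Matrix.mul_one, diagonal_mul_diagonal]
  congr 2
  congr 1
  funext i
  simp [Real.mul_self_sqrt (hM.eigenvalues_nonneg i)]

lemma psdSqrt_herm {d : ℕ} {M : Matrix (Fin d) (Fin d) ℝ} (hM : M.PosSemidef) :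
    hM.sqrtᴴ = hM.sqrt := by
  unfold Matrix.PosSemidef.sqrt
  simp [Matrix.star_eq_conjTranspose, Matrix.conjTranspose_eq_transpose_of_trivial,
    Matrix.conjTranspose_mul, Matrix.mul_assoc]

lemma psd_trace_nonneg {d : ℕ} {M : Matrix (Fin d) (Fin d) ℝ} (hM : M.PosSemidef) :
    0 ≤ M.trace := by
  rw [Matrix.trace]
  refine Finset.sum_nonneg fun i _ => ?_
  simpa using hM.2 (Finsupp.single i 1)

theorem fulladagrad_drift_positivity
    (d : ℕ) (hd : 1 ≤ d)
    (A S : Matrix (Fin d) (Fin d) ℝ) (hA : A.PosDef) (hS : S.PosDef)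
    (hASA : (A * S * A).PosSemidef)
    (Dt : Matrix (Fin d) (Fin d) ℝ) (hDt : Dt = A * S * A - 1) :
    frobInner (A * S * Dt) Dt = (A * S * Dt * Dt).trace ∧
      (A * S * Dt * Dt).trace =
        (hASA.sqrt * (Dt * A⁻¹ * Dt) * hASA.sqrt).trace ∧
      0 ≤ frobInner (A * S * Dt) Dt := by
  have hAsym : Aᵀ = A := hA.isHermitian
  have hSsym : Sᵀ = S := hS.isHermitian
  have hDsym : Dtᵀ = Dt := by
    subst hDt
    simp [Matrix.transpose_sub, Matrix.transpose_mul, hAsym, hSsym, Matrix.mul_assoc]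
  have hAu : IsUnit A := hA.isUnit
  have hAAinv : A * A⁻¹ = 1 := Matrix.mul_nonsing_inv A (isUnit_iff_isUnit_det _ |>.1 hAu)
  have hsq : hASA.sqrt * hASA.sqrt = A * S * A := psdSqrt_mul_self hASA
  have eq1 : frobInner (A * S * Dt) Dt = (A * S * Dt * Dt).trace := by
    unfold frobInner
    rw [show (A * S * Dt)ᵀ = Dt * (S * A) by
      simp [Matrix.transpose_mul, hAsym, hSsym, hDsym, Matrix.mul_assoc]]
    rw [Matrix.trace_mul_comm (Dt * (S * A)) Dt]
    rw [show Dt * (Dt * (S * A)) = (Dt * Dt) * (S * A) by noncomm_ring]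
    rw [Matrix.trace_mul_comm (Dt * Dt) (S * A)]
    rw [← Matrix.trace_transpose (S * A * (Dt * Dt))]
    rw [show (S * A * (Dt * Dt))ᵀ = (Dt * Dt)ᵀ * (Aᵀ * Sᵀ) by
      simp [Matrix.transpose_mul, Matrix.mul_assoc]]
    rw [show (Dt * Dt)ᵀ = Dt * Dt by simp [Matrix.transpose_mul, hDsym]]
    rw [hAsym, hSsym, Matrix.trace_mul_comm (Dt * Dt) (A * S)]
    rw [show A * S * (Dt * Dt) = A * S * Dt * Dt by noncomm_ring]
  have hDcomm : Dt * (A * S * A) = (A * S * A) * Dt := by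
    subst hDt; noncomm_ring
  have eq2 : (A * S * Dt * Dt).trace =
      (hASA.sqrt * (Dt * A⁻¹ * Dt) * hASA.sqrt).trace := by
    have h1 : A * S * Dt * Dt = (A * S * A) * ((A⁻¹ * Dt) * Dt) := by
      rw [show (A * S * A) * ((A⁻¹ * Dt) * Dt) = A * S * (A * A⁻¹) * (Dt * Dt) by
        noncomm_ring, hAAinv]
      noncomm_ring
    rw [h1, Matrix.trace_mul_comm]
    rw [show A⁻¹ * Dt * Dt * (A * S * A) = (A⁻¹ * Dt) * (Dt * (A * S * A)) by noncomm_ring]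
    rw [hDcomm, Matrix.trace_mul_comm (A⁻¹ * Dt)]
    rw [show A * S * A * Dt * (A⁻¹ * Dt) = (A * S * A) * (Dt * A⁻¹ * Dt) by noncomm_ring]
    conv_lhs => rw [← hsq]
    rw [show hASA.sqrt * hASA.sqrt * (Dt * A⁻¹ * Dt)
        = hASA.sqrt * (hASA.sqrt * (Dt * A⁻¹ * Dt)) by noncomm_ring]
    rw [Matrix.trace_mul_comm]
  refine ⟨eq1, eq2, ?_⟩
  rw [eq1, eq2]
  apply psd_trace_nonneg
  have hinv : (A⁻¹).PosDef := hA.inv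
  have hmid : (Dt * A⁻¹ * Dt).PosSemidef := by
    have := hinv.posSemidef.conjTranspose_mul_mul_same Dt
    simpa [Matrix.conjTranspose_eq_transpose_of_trivial, hDsym] using this
  have hsqrtT : hASA.sqrtᴴ = hASA.sqrt := psdSqrt_herm hASA
  have := hmid.mul_mul_conjTranspose_same hASA.sqrt
  rwa [hsqrtT] at this
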